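/- Let d ≥ 1 be an integer and let A ⊆ R be the d-th Veronese subalgebra of R, namely the k-subalgebra spanned by all monomials whose weighted degree is divisible by d. Then the elements x_0^d, …, x_{n−1}^d, y^d form a regular sequence on A; that is, A/(x_0^d, …, x_{n−1}^d, y^d)A ≠ 0 and the image of each element in the sequence is a nonzerodivisor on the quotient of A by the ideal generated by the preceding elements. -/

import Mathlib

open MvPolynomial

set_option synthInstance.maxHeartbeats 1000000
set_option maxHeartbeats 1000000

/-- The weighted degree of an exponent vector on the variables of
`R = k[x_0, …, x_{n-1}, y]`, where each `x_j` has degree 1 and `y` has degree 2. -/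
def degw (n : ℕ) (σ : (Fin n ⊕ Unit) →₀ ℕ) : ℕ :=
  (∑ j : Fin n, σ (Sum.inl j)) + 2 * σ (Sum.inr ())

/-- The `d`-th Veronese subalgebra of `R = k[x_0, …, x_{n-1}, y]`: the `k`-subalgebra
generated (equivalently, spanned) by all monomials whose weighted degree is divisible
by `d`. -/
noncomputable def veronese (k : Type*) [Field k] (n d : ℕ) : Subalgebra k (MvPolynomial (Fin n ⊕ Unit) k) :=
  Algebra.adjoin k
    {p | ∃ σ : (Fin n ⊕ Unit) →₀ ℕ, p = monomial σ (1 : k) ∧ d ∣ degw n σ}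

namespace StmtAux

variable {k : Type*} [Field k] {n d : ℕ}

lemma degw_add (σ τ : (Fin n ⊕ Unit) →₀ ℕ) : degw n (σ + τ) = degw n σ + degw n τ := by
  simp [degw, Finsupp.add_apply, Finset.sum_add_distrib]; ring

lemma degw_single (v : Fin n ⊕ Unit) (m : ℕ) :
    degw n (Finsupp.single v m) = m * (match v with | .inl _ => 1 | .inr _ => 2) := by
  cases v with
  | inl j =>
    simp [degw, Finsupp.single_apply, Finset.sum_ite_eq']
  | inr u =>
    simp [degw, Finsupp.single_apply, mul_comm]

/-- The set condition as a subalgebra. -/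
noncomputable def P (k : Type*) [Field k] (n d : ℕ) :
    Subalgebra k (MvPolynomial (Fin n ⊕ Unit) k) where
  carrier := {p | ∀ σ ∈ p.support, d ∣ degw n σ}
  mul_mem' := by
    intro p q hp hq σ hσ
    classical
    obtain ⟨τ, hτ, υ, hυ, rfl⟩ := Finset.mem_add.mp (support_mul p q hσ)
    rw [degw_add]
    exact dvd_add (hp _ hτ) (hq _ hυ)
  add_mem' := by
    intro p q hp hq σ hσ
    rcases Finset.mem_union.mp (Finsupp.support_add hσ) with h | h
    · exact hp _ h
    · exact hq _ h
  one_mem' := by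
    intro σ hσ
    rw [mem_support_iff, coeff_one] at hσ
    rcases eq_or_ne σ 0 with rfl | h
    · simp [degw]
    · exact absurd (by simpa [Ne.symm h] using hσ : (0:(Fin n ⊕ Unit) →₀ ℕ) = σ).symm h
  algebraMap_mem' := by
    intro c σ hσ
    rw [mem_support_iff, algebraMap_eq, coeff_C] at hσ
    rcases eq_or_ne σ 0 with rfl | h
    · simp [degw]
    · exact absurd (by simpa [Ne.symm h] using hσ : (0:(Fin n ⊕ Unit) →₀ ℕ) = σ).symm h

lemma mem_veronese_iff {p : MvPolynomial (Fin n ⊕ Unit) k} :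
    p ∈ veronese k n d ↔ ∀ σ ∈ p.support, d ∣ degw n σ := by
  constructor
  · intro hp
    have : veronese k n d ≤ P k n d := by
      apply Algebra.adjoin_le
      rintro _ ⟨σ, rfl, hσ⟩ τ hτ
      have := Finset.mem_singleton.mp (support_monomial_subset hτ)
      subst this; exact hσ
    exact this hp
  · intro h
    rw [p.as_sum]
    refine Subalgebra.sum_mem _ fun σ hσ => ?_
    rw [← mul_one (coeff σ p), ← C_mul_monomial]
    exact Subalgebra.mul_mem _ (Subalgebra.algebraMap_mem _ _)
      (Algebra.subset_adjoin ⟨σ, rfl, h σ hσ⟩)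


variable (k n d) in
lemma X_pow_mem (v : Fin n ⊕ Unit) : (X v ^ d : MvPolynomial (Fin n ⊕ Unit) k) ∈ veronese k n d := by
  rw [mem_veronese_iff, X_pow_eq_monomial]
  intro σ hσ
  have := Finset.mem_singleton.mp (support_monomial_subset hσ)
  subst this
  rw [degw_single]
  exact Dvd.dvd.mul_right dvd_rfl _

lemma aux_span (T : Set (Fin n ⊕ Unit)) (q : MvPolynomial (Fin n ⊕ Unit) k)
    (h1 : ∀ σ ∈ q.support, d ∣ degw n σ)
    (h2 : ∀ σ ∈ q.support, ∃ v ∈ T, Finsupp.single v d ≤ σ) :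
    q ∈ Submodule.span (veronese k n d)
      ((fun v => (X v : MvPolynomial (Fin n ⊕ Unit) k) ^ d) '' T) := by
  classical
  rw [q.as_sum]
  refine Submodule.sum_mem _ fun σ hσ => ?_
  obtain ⟨v, hv, hle⟩ := h2 σ hσ
  have hsub : (σ - Finsupp.single v d) + Finsupp.single v d = σ := tsub_add_cancel_of_le hle
  have hdeg : d ∣ degw n (σ - Finsupp.single v d) := by
    have h3 : degw n (σ - Finsupp.single v d) + degw n (Finsupp.single v d) = degw n σ := by
      rw [← degw_add, hsub]
    have h4 : d ∣ degw n (Finsupp.single v d) := by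
      rw [degw_single]; exact Dvd.dvd.mul_right dvd_rfl _
    have h5 := h1 σ hσ
    have h6 : degw n (σ - Finsupp.single v d) = degw n σ - degw n (Finsupp.single v d) := by
      omega
    rw [h6]
    exact Nat.dvd_sub h5 h4
  have hmem : (monomial (σ - Finsupp.single v d) (coeff σ q) : MvPolynomial (Fin n ⊕ Unit) k)
      ∈ veronese k n d := by
    rw [mem_veronese_iff]
    intro τ hτ
    have := Finset.mem_singleton.mp (support_monomial_subset hτ)
    subst this; exact hdeg
  have key : (monomial σ (coeff σ q) : MvPolynomial (Fin n ⊕ Unit) k)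
      = (⟨_, hmem⟩ : veronese k n d) • ((X v : MvPolynomial (Fin n ⊕ Unit) k) ^ d) := by
    rw [Algebra.smul_def]
    show monomial σ (coeff σ q)
      = (monomial (σ - Finsupp.single v d) (coeff σ q)) * (X v ^ d)
    rw [X_pow_eq_monomial, monomial_mul, hsub, mul_one]
  rw [key]
  exact Submodule.smul_mem _ _ (Submodule.subset_span ⟨v, hv, rfl⟩)

/-- The generating set in the Veronese. -/
def G (k : Type*) [Field k] (n d : ℕ) (T : Set (Fin n ⊕ Unit)) : Set (veronese k n d) :=
  {q : veronese k n d | ∃ v ∈ T, (q : MvPolynomial (Fin n ⊕ Unit) k) = X v ^ d}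

lemma image_G (T : Set (Fin n ⊕ Unit)) :
    (Subalgebra.val (veronese k n d)) '' (G k n d T)
      = (fun v => (X v : MvPolynomial (Fin n ⊕ Unit) k) ^ d) '' T := by
  ext q
  constructor
  · rintro ⟨⟨q, hq⟩, ⟨v, hv, hval⟩, rfl⟩
    exact ⟨v, hv, hval.symm⟩
  · rintro ⟨v, hv, rfl⟩
    exact ⟨⟨X v ^ d, X_pow_mem k n d v⟩, ⟨v, hv, rfl⟩, rfl⟩

lemma mono_image (T : Set (Fin n ⊕ Unit)) :
    ((fun v => (X v : MvPolynomial (Fin n ⊕ Unit) k) ^ d) '' T)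
      = (fun u => monomial u (1 : k)) '' ((fun v => Finsupp.single v d) '' T) := by
  rw [Set.image_image]
  exact Set.image_congr fun v _ => X_pow_eq_monomial

lemma mem_spanG (T : Set (Fin n ⊕ Unit)) (p : veronese k n d)
    (hp : (p : MvPolynomial (Fin n ⊕ Unit) k) ∈
      Ideal.span ((fun v => (X v : MvPolynomial (Fin n ⊕ Unit) k) ^ d) '' T)) :
    p ∈ Ideal.span (G k n d T) := by
  have h1 := mem_veronese_iff.mp p.2
  rw [mono_image, mem_ideal_span_monomial_image] at hp
  have h2 : ∀ σ ∈ (p : MvPolynomial (Fin n ⊕ Unit) k).support, ∃ v ∈ T, Finsupp.single v d ≤ σ := by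
    intro σ hσ
    obtain ⟨u, ⟨v, hv, rfl⟩, hle⟩ := hp σ hσ
    exact ⟨v, hv, hle⟩
  have hs := aux_span T (p : MvPolynomial (Fin n ⊕ Unit) k) h1 h2
  have himg : (fun v => (X v : MvPolynomial (Fin n ⊕ Unit) k) ^ d) '' T
      = (Algebra.linearMap (veronese k n d) (MvPolynomial (Fin n ⊕ Unit) k)) '' (G k n d T) := by
    rw [← image_G]
    rfl
  rw [himg, ← Submodule.map_span] at hs
  obtain ⟨x, hx, hxp⟩ := Submodule.mem_map.mp hs
  have : x = p := Subtype.val_injective hxp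
  exact this ▸ hx

lemma val_mem_of_mem_spanG (T : Set (Fin n ⊕ Unit)) (p : veronese k n d)
    (hp : p ∈ Ideal.span (G k n d T)) :
    (p : MvPolynomial (Fin n ⊕ Unit) k) ∈
      Ideal.span ((fun v => (X v : MvPolynomial (Fin n ⊕ Unit) k) ^ d) '' T) := by
  have : Ideal.span (G k n d T) ≤ (Ideal.span ((fun v => (X v : MvPolynomial (Fin n ⊕ Unit) k) ^ d) '' T)).comap
      (Subalgebra.val (veronese k n d)) := by
    rw [Ideal.span_le]
    rintro q ⟨v, hv, hval⟩
    have hq : (q : MvPolynomial (Fin n ⊕ Unit) k)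
        ∈ Ideal.span ((fun v => (X v : MvPolynomial (Fin n ⊕ Unit) k) ^ d) '' T) := by
      rw [hval]
      exact Ideal.subset_span ⟨v, hv, rfl⟩
    exact hq
  exact this hp

lemma R_step (T : Set (Fin n ⊕ Unit)) (v : Fin n ⊕ Unit) (hv : v ∉ T)
    (q : MvPolynomial (Fin n ⊕ Unit) k)
    (h : (X v : MvPolynomial (Fin n ⊕ Unit) k) ^ d * q ∈
      Ideal.span ((fun v => (X v : MvPolynomial (Fin n ⊕ Unit) k) ^ d) '' T)) :
    q ∈ Ideal.span ((fun v => (X v : MvPolynomial (Fin n ⊕ Unit) k) ^ d) '' T) := by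
  rw [mono_image, mem_ideal_span_monomial_image] at h ⊢
  intro σ hσ
  have hc : coeff (Finsupp.single v d + σ) ((X v : MvPolynomial (Fin n ⊕ Unit) k) ^ d * q)
      = coeff σ q := by
    rw [X_pow_eq_monomial, coeff_monomial_mul, one_mul]
  have hmem : Finsupp.single v d + σ ∈ ((X v : MvPolynomial (Fin n ⊕ Unit) k) ^ d * q).support := by
    rw [mem_support_iff, hc]
    exact mem_support_iff.mp hσ
  obtain ⟨u, ⟨w, hw, rfl⟩, hle⟩ := h _ hmem
  refine ⟨_, ⟨w, hw, rfl⟩, ?_⟩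
  have hwv : w ≠ v := fun hwv => hv (hwv ▸ hw)
  rw [Finsupp.single_le_iff] at hle ⊢
  simpa [Finsupp.add_apply, Finsupp.single_apply, hwv.symm] using hle

lemma one_not_mem (hd : 1 ≤ d) (T : Set (Fin n ⊕ Unit)) :
    (1 : MvPolynomial (Fin n ⊕ Unit) k) ∉
      Ideal.span ((fun v => (X v : MvPolynomial (Fin n ⊕ Unit) k) ^ d) '' T) := by
  rw [mono_image, mem_ideal_span_monomial_image]
  intro h
  have h0 : (0 : (Fin n ⊕ Unit) →₀ ℕ) ∈ (1 : MvPolynomial (Fin n ⊕ Unit) k).support := by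
    rw [mem_support_iff, coeff_one]
    simp
  obtain ⟨u, ⟨w, hw, rfl⟩, hle⟩ := h _ h0
  rw [Finsupp.single_le_iff] at hle
  simp at hle
  omega



lemma smul_top_eq {A : Type*} [CommRing A] (I : Ideal A) :
    I • (⊤ : Submodule A A) = I := by
  apply le_antisymm
  · exact Submodule.smul_le.mpr fun r hr m _ => by simpa [smul_eq_mul] using I.mul_mem_right m hr
  · intro x hx
    simpa [smul_eq_mul] using Submodule.smul_mem_smul hx (Submodule.mem_top (x := (1:A)))

lemma quot_reg {A : Type*} [CommRing A] (I : Ideal A) (r : A)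
    (h : ∀ p, r * p ∈ I → p ∈ I) :
    IsSMulRegular (A ⧸ (I • ⊤ : Submodule A A)) r := by
  rw [smul_top_eq]
  intro x y hxy
  obtain ⟨p, rfl⟩ := Submodule.Quotient.mk_surjective _ x
  obtain ⟨q, rfl⟩ := Submodule.Quotient.mk_surjective _ y
  have : Submodule.Quotient.mk (r • p) = Submodule.Quotient.mk (p := (I : Submodule A A)) (r • q) := by
    rw [Submodule.Quotient.mk_smul, Submodule.Quotient.mk_smul]
    exact hxy
  rw [Submodule.Quotient.eq] at this ⊢
  have h2 : r * (p - q) ∈ I := by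
    rw [mul_sub]
    simpa [smul_eq_mul] using this
  exact h _ h2

variable {a : Fin n → veronese k n d} {b : veronese k n d}
  (ha : ∀ j : Fin n, (a j : MvPolynomial (Fin n ⊕ Unit) k) = X (Sum.inl j) ^ d)
  (hb : (b : MvPolynomial (Fin n ⊕ Unit) k) = X (Sum.inr ()) ^ d)

include ha in
lemma take_set (i : ℕ) (hi : i ≤ n) :
    {r | r ∈ (List.ofFn a ++ [b]).take i}
      = G k n d (Sum.inl '' {j : Fin n | (j : ℕ) < i}) := by
  ext r
  simp only [Set.mem_setOf_eq]
  constructor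
  · intro hr
    obtain ⟨m, hm, hr⟩ := List.mem_iff_getElem.mp hr
    have hmi : m < i := by
      have := hm
      simp [List.length_take] at this
      omega
    have hmn : m < n := lt_of_lt_of_le hmi hi
    have : ((List.ofFn a ++ [b]).take i)[m] = a ⟨m, hmn⟩ := by
      rw [List.getElem_take]
      rw [List.getElem_append_left (by simpa using hmn)]
      simp
    rw [this] at hr
    exact ⟨Sum.inl ⟨m, hmn⟩, ⟨⟨m, hmn⟩, hmi, rfl⟩, hr ▸ ha _⟩
  · rintro ⟨v, ⟨j, hj, rfl⟩, hval⟩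
    have : r = a j := Subtype.val_injective (by rw [hval, ha])
    subst this
    have hj' : (j : ℕ) < i := hj
    refine List.mem_iff_getElem.mpr ⟨j, ?_, ?_⟩
    · simp [List.length_take]
      omega
    · rw [List.getElem_take, List.getElem_append_left (by simpa using lt_of_lt_of_le hj hi)]
      simp

include ha hb in
lemma full_set :
    {r | r ∈ (List.ofFn a ++ [b])} = G k n d Set.univ := by
  ext r
  simp only [Set.mem_setOf_eq, List.mem_append, List.mem_ofFn, List.mem_singleton]
  constructor
  · rintro (⟨j, rfl⟩ | rfl)
    · exact ⟨Sum.inl j, trivial, ha j⟩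
    · exact ⟨Sum.inr (), trivial, hb⟩
  · rintro ⟨v, -, hval⟩
    cases v with
    | inl j => exact Or.inl ⟨j, Subtype.val_injective (by rw [ha, ← hval])⟩
    | inr u => exact Or.inr (Subtype.val_injective (by cases u; rw [hb, ← hval]))

lemma step (T : Set (Fin n ⊕ Unit)) (v : Fin n ⊕ Unit) (hv : v ∉ T)
    (r : veronese k n d) (hr : (r : MvPolynomial (Fin n ⊕ Unit) k) = X v ^ d)
    (p : veronese k n d) (hp : r * p ∈ Ideal.span (G k n d T)) :
    p ∈ Ideal.span (G k n d T) := by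
  have h1 := val_mem_of_mem_spanG T _ hp
  have h2 : ((r * p : veronese k n d) : MvPolynomial (Fin n ⊕ Unit) k)
      = X v ^ d * (p : MvPolynomial (Fin n ⊕ Unit) k) := by
    rw [MulMemClass.coe_mul, hr]
  rw [h2] at h1
  exact mem_spanG T p (R_step T v hv _ h1)

end StmtAux

/-- Let `d ≥ 1` and let `A` be the `d`-th Veronese subalgebra of
`R = k[x_0, …, x_{n-1}, y]` (with `deg x_j = 1`, `deg y = 2`). Then the elements
`x_0^d, …, x_{n-1}^d, y^d` of `A` form a regular sequence on `A`. -/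
theorem stmt_4 (k : Type*) [Field k] (n : ℕ) (hn : 1 ≤ n) (d : ℕ) (hd : 1 ≤ d)
    (a : Fin n → veronese k n d) (b : veronese k n d)
    (ha : ∀ j : Fin n, (a j : MvPolynomial (Fin n ⊕ Unit) k) = X (Sum.inl j) ^ d)
    (hb : (b : MvPolynomial (Fin n ⊕ Unit) k) = X (Sum.inr ()) ^ d) :
    RingTheory.Sequence.IsRegular (veronese k n d) (List.ofFn a ++ [b]) := by
  classical
  constructor
  · constructor
    intro i hi
    have hlen : (List.ofFn a ++ [b]).length = n + 1 := by simp
    have hin : i ≤ n := by rw [hlen] at hi; omega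
    have hIdeal : Ideal.ofList ((List.ofFn a ++ [b]).take i)
        = Ideal.span (StmtAux.G k n d (Sum.inl '' {j : Fin n | (j : ℕ) < i})) :=
      congrArg Ideal.span (StmtAux.take_set ha i hin)
    rw [hIdeal]
    rcases Nat.lt_or_ge i n with hin' | hin'
    · have helt : (List.ofFn a ++ [b])[i] = a ⟨i, hin'⟩ := by
        rw [List.getElem_append_left (by simpa using hin')]
        simp
      rw [helt]
      apply StmtAux.quot_reg
      intro p hp
      refine StmtAux.step _ (Sum.inl ⟨i, hin'⟩) ?_ _ (ha _) _ hp
      rintro ⟨j, hj, hjeq⟩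
      have : j = ⟨i, hin'⟩ := Sum.inl_injective hjeq
      subst this
      exact absurd hj (by simp)
    · have hieq : i = n := le_antisymm hin hin'
      subst hieq
      have helt : (List.ofFn a ++ [b])[i] = b := by
        rw [List.getElem_append_right (by simp)]
        simp
      rw [helt]
      apply StmtAux.quot_reg
      intro p hp
      refine StmtAux.step _ (Sum.inr ()) ?_ _ hb _ hp
      rintro ⟨j, -, hjeq⟩
      exact Sum.inl_ne_inr hjeq
  · intro heq
    have h1 : (1 : veronese k n d) ∈ Ideal.ofList (List.ofFn a ++ [b]) • (⊤ : Submodule _ _) :=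
      heq ▸ Submodule.mem_top
    rw [StmtAux.smul_top_eq] at h1
    have h2 : Ideal.ofList (List.ofFn a ++ [b]) = Ideal.span (StmtAux.G k n d Set.univ) :=
      congrArg Ideal.span (StmtAux.full_set ha hb)
    rw [h2] at h1
    have h3 := StmtAux.val_mem_of_mem_spanG Set.univ _ h1
    exact StmtAux.one_not_mem hd Set.univ (by simpa using h3)
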